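/- arXiv:1810.02737 — 2 statements merged into one kernel-verified Lean document; each statement's English description precedes it below -/
import Mathlib

section
/- Let G and H be disjoint graphs and u ∈ V(G). Then γ_gr(G with u replaced by H) = max{γ_gr(G), γ_gr^u(G) + γ_gr(H) − 1}, where γ_gr^u(G) = max{γ_gr(G, I) : I independent set of G containing u}. -/
namespace GrundyDom

/-- Closed neighborhood N[v]. -/
def cn {V : Type*} (G : SimpleGraph V) (v : V) : Set V := insert v (G.neighborSet v)

/-- Union of closed neighborhoods of the vertices of a list. -/
def cnUnion {V : Type*} (G : SimpleGraph V) (L : List V) : Set V := ⋃ v ∈ L, cn G v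

/-- Private neighborhood of `v` with respect to the first `i` entries of `S`:
`N[v] \ (N[v_1] ∪ ... ∪ N[v_i])`. -/
def PN {V : Type*} (G : SimpleGraph V) (S : List V) (i : ℕ) (v : V) : Set V :=
  cn G v \ cnUnion G (S.take i)

/-- A legal dominating sequence: distinct vertices, dominating set, and every
vertex of the sequence has a nonempty private neighborhood w.r.t. its predecessors. -/
structure IsLegal {V : Type*} (G : SimpleGraph V) (S : List V) : Prop where
  nodup : S.Nodup
  dominates : ∀ v : V, ∃ u ∈ S, v ∈ cn G u
  legal : ∀ i : Fin S.length, (PN G S i.val (S.get i)).Nonempty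

/-- The set `I_S` of vertices that footprint themselves in `S`. -/
def selfFoot {V : Type*} (G : SimpleGraph V) (S : List V) : Set V :=
  {v | ∃ i : Fin S.length, S.get i = v ∧ v ∈ PN G S i.val v}

/-- Grundy domination number: maximum length of a legal dominating sequence. -/
noncomputable def gammaGr {V : Type*} (G : SimpleGraph V) : ℕ :=
  sSup {k | ∃ S : List V, IsLegal G S ∧ S.length = k}

/-- `γ_gr(G, I)`: maximum length of a legal dominating sequence `S` with `I_S = I`. -/
noncomputable def gammaGrOn {V : Type*} (G : SimpleGraph V) (I : Set V) : ℕ :=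
  sSup {k | ∃ S : List V, IsLegal G S ∧ selfFoot G S = I ∧ S.length = k}

/-- `γ_gr^u(G)`: maximum of `γ_gr(G, I)` over independent sets `I` containing `u`. -/
noncomputable def gammaGrVert {V : Type*} (G : SimpleGraph V) (u : V) : ℕ :=
  sSup {k | ∃ I : Set V, (∀ ⦃a⦄, a ∈ I → ∀ ⦃b⦄, b ∈ I → a ≠ b → ¬ G.Adj a b) ∧
    u ∈ I ∧ k = gammaGrOn G I}

/-- Independent set of a graph. -/
def IsIndep {V : Type*} (G : SimpleGraph V) (I : Set V) : Prop :=
  ∀ ⦃u⦄, u ∈ I → ∀ ⦃v⦄, v ∈ I → u ≠ v → ¬ G.Adj u v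

/-- The X-join product `G ↩ 𝓡`: replace each vertex `v` of `G` by the graph `R v`. -/
def XJoin {V : Type*} (G : SimpleGraph V) {W : V → Type*} (R : ∀ v, SimpleGraph (W v)) :
    SimpleGraph (Σ v, W v) where
  Adj x y := G.Adj x.1 y.1 ∨ ∃ h : x.1 = y.1, (R y.1).Adj (h ▸ x.2) y.2
  symm := ⟨by
    rintro ⟨a, xa⟩ ⟨b, yb⟩ (h | ⟨h, hadj⟩)
    · exact Or.inl h.symm
    · dsimp at h hadj
      subst h
      exact Or.inr ⟨rfl, hadj.symm⟩⟩
  loopless := ⟨by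
    rintro ⟨a, xa⟩ (h | ⟨h, hadj⟩)
    · exact G.irrefl h
    · exact (R a).irrefl hadj⟩

/-- The lexicographic product `G ∘ H`. -/
def Lex {V W : Type*} (G : SimpleGraph V) (H : SimpleGraph W) : SimpleGraph (V × W) where
  Adj x y := G.Adj x.1 y.1 ∨ (x.1 = y.1 ∧ H.Adj x.2 y.2)
  symm := ⟨by
    rintro x y (h | ⟨h1, h2⟩)
    · exact Or.inl h.symm
    · exact Or.inr ⟨h1.symm, h2.symm⟩⟩
  loopless := ⟨by
    rintro x (h | ⟨_, h⟩)
    · exact G.irrefl h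
    · exact H.irrefl h⟩

/-- The replacement graph `G_{u ↩ H}`: replace the vertex `u` of `G` by `H`. -/
def Replace {V : Type*} (G : SimpleGraph V) (u : V) {W : Type*} (H : SimpleGraph W) :
    SimpleGraph ({v : V // v ≠ u} ⊕ W) where
  Adj x y :=
    match x, y with
    | Sum.inl a, Sum.inl b => G.Adj a.1 b.1
    | Sum.inl a, Sum.inr _ => G.Adj a.1 u
    | Sum.inr _, Sum.inl b => G.Adj u b.1
    | Sum.inr h1, Sum.inr h2 => H.Adj h1 h2
  symm := ⟨by rintro (a|a) (b|b) h <;> exact h.symm⟩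
  loopless := ⟨by rintro (a|a) h <;> exact h.ne rfl⟩

/-- `C_n^m`: the m-th power of the n-cycle, on vertex set `ZMod n`;
two vertices are adjacent iff their circular distance is between 1 and m. -/
def cyclePow (n m : ℕ) : SimpleGraph (ZMod n) where
  Adj i j := i ≠ j ∧ ∃ k : ℕ, 1 ≤ k ∧ k ≤ m ∧ (j = i + k ∨ i = j + k)
  symm := ⟨by
    rintro i j ⟨hne, k, h1, h2, h3⟩
    exact ⟨hne.symm, k, h1, h2, h3.symm⟩⟩
  loopless := ⟨fun i h => h.1 rfl⟩

/-- `P_n^m`: the m-th power of the n-path, on vertex set `Fin n`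
(vertex `i` represents the `(i+1)`-st vertex of the path);
two vertices adjacent iff their distance is between 1 and m. -/
def pathPow (n m : ℕ) : SimpleGraph (Fin n) where
  Adj i j := i ≠ j ∧ Nat.dist i.val j.val ≤ m
  symm := ⟨by
    rintro i j ⟨hne, hd⟩
    exact ⟨hne.symm, by rwa [Nat.dist_comm]⟩⟩
  loopless := ⟨fun i h => h.1 rfl⟩

end GrundyDom

open GrundyDom Finset


namespace GrundyDom

set_option linter.unusedSectionVars false

variable {V : Type*} {G : SimpleGraph V}

lemma mem_cn {x v : V} : x ∈ cn G v ↔ x = v ∨ G.Adj v x := by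
  simp [cn, SimpleGraph.mem_neighborSet]

lemma self_mem_cn {v : V} : v ∈ cn G v := mem_cn.2 (Or.inl rfl)

lemma mem_cnUnion {x : V} {L : List V} : x ∈ cnUnion G L ↔ ∃ v ∈ L, x ∈ cn G v := by
  simp [cnUnion]

lemma cnUnion_sub {L L' : List V} (h : ∀ v ∈ L, v ∈ L') : cnUnion G L ⊆ cnUnion G L' := by
  intro x hx
  rcases mem_cnUnion.1 hx with ⟨v, hv, hxv⟩
  exact mem_cnUnion.2 ⟨v, h v hv, hxv⟩

/-- Legality via splits. -/
def Leg {V : Type*} (G : SimpleGraph V) (S : List V) : Prop :=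
  ∀ L v R, S = L ++ v :: R → ∃ x ∈ cn G v, x ∉ cnUnion G L

def Dom {V : Type*} (G : SimpleGraph V) (S : List V) : Prop :=
  ∀ v : V, ∃ s ∈ S, v ∈ cn G s

lemma legal_iff_leg {S : List V} :
    (∀ i : Fin S.length, (PN G S i.val (S.get i)).Nonempty) ↔ Leg G S := by
  constructor
  · intro h L v R hS
    have hlen : L.length < S.length := by subst hS; simp
    have hget : S.get ⟨L.length, hlen⟩ = v := by
      subst hS; simp [List.get_eq_getElem, List.getElem_append_right]
    have htake : S.take L.length = L := by subst hS; simp [List.take_left]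
    rcases h ⟨L.length, hlen⟩ with ⟨x, hx1, hx2⟩
    rw [hget] at hx1
    rw [htake] at hx2
    exact ⟨x, hx1, hx2⟩
  · intro h i
    have hS : S = S.take i.val ++ S.get i :: S.drop (i.val + 1) := by
      conv_lhs => rw [← List.take_append_drop i.val S]
      congr 1
      rw [List.drop_eq_getElem_cons i.isLt]
      rfl
    rcases h _ _ _ hS with ⟨x, hx1, hx2⟩
    exact ⟨x, hx1, hx2⟩

lemma isLegal_iff {S : List V} :
    IsLegal G S ↔ S.Nodup ∧ Leg G S ∧ Dom G S := by
  constructor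
  · intro h; exact ⟨h.nodup, legal_iff_leg.1 h.legal, h.dominates⟩
  · rintro ⟨h1, h2, h3⟩; exact ⟨h1, h3, legal_iff_leg.2 h2⟩

lemma mem_selfFoot {S : List V} {u : V} :
    u ∈ selfFoot G S ↔ ∃ L R, S = L ++ u :: R ∧ u ∉ cnUnion G L := by
  constructor
  · rintro ⟨i, hgi, hpn⟩
    refine ⟨S.take i.val, S.drop (i.val + 1), ?_, ?_⟩
    · conv_lhs => rw [← List.take_append_drop i.val S]
      rw [List.drop_eq_getElem_cons i.isLt]
      rw [← hgi]; rfl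
    · exact hpn.2
  · rintro ⟨L, R, hS, hu⟩
    have hlen : L.length < S.length := by subst hS; simp
    have hget : S.get ⟨L.length, hlen⟩ = u := by
      subst hS; simp [List.get_eq_getElem, List.getElem_append_right]
    have htake : S.take L.length = L := by subst hS; simp [List.take_left]
    exact ⟨⟨L.length, hlen⟩, hget, self_mem_cn, by rw [htake]; exact hu⟩

end GrundyDom

namespace GrundyDom
variable {V : Type*} {G : SimpleGraph V}

lemma leg_append_singleton {S : List V} {v : V} (hS : Leg G S) (hv : v ∉ cnUnion G S) :
    Leg G (S ++ [v]) := by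
  intro L x R h
  rcases List.append_eq_append_iff.1 h with ⟨a, ha1, ha2⟩ | ⟨c, hc1, hc2⟩
  · -- L = S ++ a, [v] = a ++ x :: R
    have hlen := congrArg List.length ha2
    simp at hlen
    have ha' : a = [] ∧ R = [] := by
      constructor <;> [skip; skip] <;> (apply List.eq_nil_of_length_eq_zero; omega)
    rcases ha' with ⟨rfl, rfl⟩
    simp at ha2 ha1
    subst ha2 ha1
    exact ⟨v, self_mem_cn, hv⟩
  · -- S = L ++ c, x :: R = c ++ [v]
    cases c with
    | nil =>
      simp at hc1 hc2
      rcases hc2 with ⟨rfl, rfl⟩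
      subst hc1
      exact ⟨x, self_mem_cn, hv⟩
    | cons y c' =>
      rcases List.cons_eq_cons.1 hc2 with ⟨rfl, hR⟩
      exact hS L x c' (by rw [hc1])

lemma mem_cnUnion_of_mem {S : List V} {s : V} (hs : s ∈ S) : s ∈ cnUnion G S :=
  mem_cnUnion.2 ⟨s, hs, self_mem_cn⟩

lemma nodup_append_singleton {S : List V} (hS : S.Nodup) {v : V} (hv : v ∉ cnUnion G S) :
    (S ++ [v]).Nodup := by
  rw [List.nodup_append]
  refine ⟨hS, List.nodup_singleton v, ?_⟩
  intro a ha b hb hab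
  simp at hb
  subst hb
  exact hv (hab ▸ mem_cnUnion_of_mem ha)

/-- Greedy extension of a legal sequence to a legal dominating one. -/
lemma extend_to_dom [Fintype V] {S : List V} (hnd : S.Nodup) (hS : Leg G S) :
    ∃ T : List V, IsLegal G (S ++ T) ∧ (∀ s ∈ S, s ∈ S ++ T) := by
  by_cases hdom : Dom G S
  · exact ⟨[], by rw [List.append_nil]; exact isLegal_iff.2 ⟨hnd, hS, hdom⟩, by simp⟩
  · have hex : ∃ v, v ∉ cnUnion G S := by
      by_contra hcon
      push_neg at hcon
      exact hdom (fun v => mem_cnUnion.1 (hcon v))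
    rcases hex with ⟨v, hv'⟩
    have hvnotmem : v ∉ S := fun h => hv' (mem_cnUnion_of_mem h)
    have hnd' : (S ++ [v]).Nodup := nodup_append_singleton hnd hv'
    have hleg' : Leg G (S ++ [v]) := leg_append_singleton hS hv'
    have hlt : Fintype.card V - (S ++ [v]).length < Fintype.card V - S.length := by
      have h1 : (S ++ [v]).length = S.length + 1 := by simp
      have h2 : (S ++ [v]).length ≤ Fintype.card V := List.Nodup.length_le_card hnd'
      omega
    rcases extend_to_dom hnd' hleg' with ⟨T, hT, _⟩
    exact ⟨[v] ++ T, by rwa [← List.append_assoc], fun s hs => by simp [hs]⟩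
termination_by Fintype.card V - S.length

lemma length_le_card [Fintype V] {S : List V} (h : S.Nodup) : S.length ≤ Fintype.card V :=
  List.Nodup.length_le_card h

lemma bddAbove_lengths [Fintype V] :
    BddAbove {k | ∃ S : List V, IsLegal G S ∧ S.length = k} := by
  refine ⟨Fintype.card V, ?_⟩
  rintro k ⟨S, hS, rfl⟩
  exact length_le_card hS.nodup

lemma le_gammaGr [Fintype V] {S : List V} (h : IsLegal G S) : S.length ≤ gammaGr G :=
  le_csSup bddAbove_lengths ⟨S, h, rfl⟩

lemma exists_isLegal [Fintype V] [Nonempty V] : ∃ S : List V, IsLegal G S := by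
  rcases extend_to_dom (S := ([] : List V)) (List.nodup_nil) (fun L v R h => by simp at h) with ⟨T, hT, _⟩
  exact ⟨T, by simpa using hT⟩

lemma gammaGr_spec [Fintype V] [Nonempty V] :
    ∃ S : List V, IsLegal G S ∧ S.length = gammaGr G := by
  have hne : {k | ∃ S : List V, IsLegal G S ∧ S.length = k}.Nonempty := by
    rcases exists_isLegal (G := G) with ⟨S, hS⟩
    exact ⟨S.length, S, hS, rfl⟩
  have := Nat.sSup_mem hne bddAbove_lengths
  rcases this with ⟨S, hS, hlen⟩
  exact ⟨S, hS, hlen⟩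

lemma gammaGr_pos [Fintype V] [Nonempty V] : 1 ≤ gammaGr G := by
  rcases gammaGr_spec (G := G) with ⟨S, hS, hlen⟩
  rcases hS.dominates (Classical.arbitrary V) with ⟨s, hs, -⟩
  have : S ≠ [] := fun h => by subst h; simp at hs
  have : 0 < S.length := List.length_pos_iff.2 this
  omega

/-- A legal (not nec. dominating) sequence bounds gammaGr. -/
lemma leg_le_gammaGr [Fintype V] {S : List V} (hnd : S.Nodup) (hS : Leg G S) :
    S.length ≤ gammaGr G := by
  rcases extend_to_dom hnd hS with ⟨T, hT, -⟩
  calc S.length ≤ (S ++ T).length := by simp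
  _ ≤ gammaGr G := le_gammaGr hT

lemma selfFoot_indep {S : List V} {a b : V} (ha : a ∈ selfFoot G S) (hb : b ∈ selfFoot G S)
    (hab : a ≠ b) : ¬ G.Adj a b := by
  rcases ha with ⟨i, hia, hpa⟩
  rcases hb with ⟨j, hjb, hpb⟩
  intro hadj
  have hij : i.val ≠ j.val := by
    intro h
    apply hab
    rw [← hia, ← hjb]
    congr 1
    exact Fin.ext h
  rcases Nat.lt_or_ge i.val j.val with hlt | hge
  · -- a occurs in S.take j
    have hmem : a ∈ S.take j.val := by
      have : (S.take j.val)[i.val]'(by simp [List.length_take]; omega) = S[i.val] := List.getElem_take ..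
      rw [← hia]
      rw [List.get_eq_getElem, ← this]
      exact List.getElem_mem _
    exact hpb.2 (mem_cnUnion.2 ⟨a, hmem, mem_cn.2 (Or.inr hadj)⟩)
  · have hlt : j.val < i.val := by omega
    have hmem : b ∈ S.take i.val := by
      have : (S.take i.val)[j.val]'(by simp [List.length_take]; omega) = S[j.val] := List.getElem_take ..
      rw [← hjb]
      rw [List.get_eq_getElem, ← this]
      exact List.getElem_mem _
    exact hpa.2 (mem_cnUnion.2 ⟨b, hmem, mem_cn.2 (Or.inr hadj.symm)⟩)

lemma gammaGrOn_le_card [Fintype V] {I : Set V} : gammaGrOn G I ≤ Fintype.card V := by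
  apply csSup_le'
  rintro k ⟨S, hS, -, rfl⟩
  exact length_le_card hS.nodup

lemma bddAbove_gammaGrOn_lengths [Fintype V] {I : Set V} :
    BddAbove {k | ∃ S : List V, IsLegal G S ∧ selfFoot G S = I ∧ S.length = k} := by
  refine ⟨Fintype.card V, ?_⟩
  rintro k ⟨S, hS, -, rfl⟩
  exact length_le_card hS.nodup

lemma bddAbove_gammaGrVert_set [Fintype V] {u : V} :
    BddAbove {k | ∃ I : Set V, (∀ ⦃a⦄, a ∈ I → ∀ ⦃b⦄, b ∈ I → a ≠ b → ¬ G.Adj a b) ∧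
      u ∈ I ∧ k = gammaGrOn G I} := by
  refine ⟨Fintype.card V, ?_⟩
  rintro k ⟨I, -, -, rfl⟩
  exact gammaGrOn_le_card

lemma le_gammaGrVert [Fintype V] {S : List V} {u : V} (hS : IsLegal G S)
    (hu : u ∈ selfFoot G S) : S.length ≤ gammaGrVert G u := by
  have h1 : S.length ≤ gammaGrOn G (selfFoot G S) :=
    le_csSup bddAbove_gammaGrOn_lengths ⟨S, hS, rfl, rfl⟩
  have h2 : gammaGrOn G (selfFoot G S) ≤ gammaGrVert G u := by
    apply le_csSup bddAbove_gammaGrVert_set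
    exact ⟨selfFoot G S, fun a ha b hb hab => selfFoot_indep ha hb hab, hu, rfl⟩
  omega

lemma gammaGrVert_spec [Fintype V] {u : V} :
    ∃ S : List V, IsLegal G S ∧ u ∈ selfFoot G S ∧ gammaGrVert G u ≤ S.length := by
  -- first: nonempty witness from greedy starting at [u]
  have hleg0 : Leg G [u] := by
    intro L v R h
    cases L with
    | nil =>
      have : v = u := by
        have := congrArg (fun l => l.head?) h
        simpa using this.symm
      subst this
      exact ⟨v, self_mem_cn, by simp [cnUnion]⟩
    | cons y L' =>
      exfalso
      have := congrArg List.length h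
      simp at this
      try omega
  rcases extend_to_dom (S := [u]) (List.nodup_singleton u) hleg0 with ⟨T, hT, -⟩
  have huf : u ∈ selfFoot G ([u] ++ T) :=
    mem_selfFoot.2 ⟨[], T, by simp, by simp [cnUnion]⟩
  have h1 : ([u] ++ T).length ≤ gammaGrOn G (selfFoot G ([u] ++ T)) :=
    le_csSup bddAbove_gammaGrOn_lengths ⟨_, hT, rfl, rfl⟩
  have hne : {k | ∃ I : Set V, (∀ ⦃a⦄, a ∈ I → ∀ ⦃b⦄, b ∈ I → a ≠ b → ¬ G.Adj a b) ∧
      u ∈ I ∧ k = gammaGrOn G I}.Nonempty :=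
    ⟨gammaGrOn G (selfFoot G ([u] ++ T)),
      selfFoot G ([u] ++ T), fun a ha b hb hab => selfFoot_indep ha hb hab, huf, rfl⟩
  have hmem := Nat.sSup_mem hne bddAbove_gammaGrVert_set
  rcases hmem with ⟨I, hI, huI, hIeq⟩
  -- gammaGrVert G u = gammaGrOn G I ≥ 1
  have hpos : 1 ≤ gammaGrVert G u := by
    have h2 : ([u] ++ T).length ≤ gammaGrVert G u := le_gammaGrVert hT huf
    have h3 : 1 ≤ ([u] ++ T).length := by simp
    omega
  -- the inner sup is attained
  have hne2 : {k | ∃ S : List V, IsLegal G S ∧ selfFoot G S = I ∧ S.length = k}.Nonempty := by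
    by_contra hemp
    rw [Set.not_nonempty_iff_eq_empty] at hemp
    have : gammaGrOn G I = 0 := by rw [gammaGrOn, hemp]; exact csSup_empty
    have h0 : gammaGrVert G u = 0 := by rw [gammaGrVert, hIeq]; exact this
    omega
  have hmem2 := Nat.sSup_mem hne2 bddAbove_gammaGrOn_lengths
  rcases hmem2 with ⟨S, hS, hSF, hlen⟩
  refine ⟨S, hS, hSF ▸ huI, ?_⟩
  have : gammaGrVert G u = gammaGrOn G I := hIeq
  rw [this, gammaGrOn, ← hlen]

end GrundyDom

namespace GrundyDom



section Transfer

variable {V W : Type*} {G : SimpleGraph V} {u : V} {H : SimpleGraph W}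

lemma cn_inl_inl {x c : {v : V // v ≠ u}} :
    Sum.inl x ∈ cn (Replace G u H) (Sum.inl c) ↔ x.1 ∈ cn G c.1 := by
  rw [mem_cn, mem_cn]
  constructor
  · rintro (h | h)
    · left; rw [Sum.inl.injEq] at h; exact congrArg Subtype.val h
    · right; exact h
  · rintro (h | h)
    · left; rw [Sum.inl.injEq]; exact Subtype.ext h
    · right; exact h

lemma cn_inr_inl {w : W} {c : {v : V // v ≠ u}} :
    Sum.inr w ∈ cn (Replace G u H) (Sum.inl c) ↔ u ∈ cn G c.1 := by
  rw [mem_cn, mem_cn]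
  constructor
  · rintro (h | h)
    · exact absurd h (by simp)
    · right; exact h
  · rintro (h | h)
    · exact absurd h.symm c.2
    · right; exact h

lemma cn_inl_inr {x : {v : V // v ≠ u}} {w : W} :
    Sum.inl x ∈ cn (Replace G u H) (Sum.inr w) ↔ x.1 ∈ cn G u := by
  rw [mem_cn, mem_cn]
  constructor
  · rintro (h | h)
    · exact absurd h (by simp)
    · right; exact h
  · rintro (h | h)
    · exact absurd h x.2
    · right; exact h

lemma cn_inr_inr {w' w : W} :
    Sum.inr w' ∈ cn (Replace G u H) (Sum.inr w) ↔ w' ∈ cn H w := by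
  rw [mem_cn, mem_cn]
  constructor
  · rintro (h | h)
    · left; rwa [Sum.inr.injEq] at h
    · right; exact h
  · rintro (h | h)
    · left; rw [Sum.inr.injEq]; exact h
    · right; exact h

/-- Projection to `V`. -/
def projV (T : List ({v : V // v ≠ u} ⊕ W)) : List V :=
  T.filterMap (Sum.elim (fun a => some a.1) (fun _ => none))

/-- Projection to `W`. -/
def projW (T : List ({v : V // v ≠ u} ⊕ W)) : List W :=
  T.filterMap (Sum.elim (fun _ => none) some)

lemma mem_projV {T : List ({v : V // v ≠ u} ⊕ W)} {c : V} :
    c ∈ projV (u := u) T ↔ ∃ a : {v : V // v ≠ u}, Sum.inl a ∈ T ∧ a.1 = c := by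
  rw [projV, List.mem_filterMap]
  constructor
  · rintro ⟨s, hs, hsome⟩
    rcases s with a | w
    · exact ⟨a, hs, by simpa using hsome⟩
    · simp at hsome
  · rintro ⟨a, ha, rfl⟩
    exact ⟨Sum.inl a, ha, rfl⟩

lemma mem_projW {T : List ({v : V // v ≠ u} ⊕ W)} {w : W} :
    w ∈ projW (u := u) T ↔ Sum.inr w ∈ T := by
  rw [projW, List.mem_filterMap]
  constructor
  · rintro ⟨s, hs, hsome⟩
    rcases s with a | w'
    · simp at hsome
    · simp at hsome; subst hsome; exact hs
  · intro h; exact ⟨Sum.inr w, h, rfl⟩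

lemma projW_eq_nil_iff {T : List ({v : V // v ≠ u} ⊕ W)} :
    projW (u := u) T = [] ↔ ∀ s ∈ T, ∃ a, s = Sum.inl a := by
  rw [projW, List.filterMap_eq_nil_iff]
  constructor
  · intro h s hs
    rcases s with a | w
    · exact ⟨a, rfl⟩
    · have := h _ hs; simp at this
  · intro h s hs
    rcases h s hs with ⟨a, rfl⟩
    rfl

lemma projV_append {T₁ T₂ : List ({v : V // v ≠ u} ⊕ W)} :
    projV (u := u) (T₁ ++ T₂) = projV (u := u) T₁ ++ projV (u := u) T₂ :=
  List.filterMap_append ..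

lemma projW_append {T₁ T₂ : List ({v : V // v ≠ u} ⊕ W)} :
    projW (u := u) (T₁ ++ T₂) = projW (u := u) T₁ ++ projW (u := u) T₂ :=
  List.filterMap_append ..

@[simp] lemma projV_cons_inl {a : {v : V // v ≠ u}} {T : List ({v : V // v ≠ u} ⊕ W)} :
    projV (u := u) (Sum.inl a :: T) = a.1 :: projV (u := u) T := rfl

@[simp] lemma projV_cons_inr {w : W} {T : List ({v : V // v ≠ u} ⊕ W)} :
    projV (u := u) (Sum.inr w :: T) = projV (u := u) T := rfl

@[simp] lemma projW_cons_inl {a : {v : V // v ≠ u}} {T : List ({v : V // v ≠ u} ⊕ W)} :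
    projW (u := u) (Sum.inl a :: T) = projW (u := u) T := rfl

@[simp] lemma projW_cons_inr {w : W} {T : List ({v : V // v ≠ u} ⊕ W)} :
    projW (u := u) (Sum.inr w :: T) = w :: projW (u := u) T := rfl

lemma projV_length_add {T : List ({v : V // v ≠ u} ⊕ W)} :
    (projV (u := u) T).length + (projW (u := u) T).length = T.length := by
  induction T with
  | nil => rfl
  | cons s T ih =>
    rcases s with a | w <;> simp <;> omega

/-- Transfer lemma for `inl` membership in `cnUnion`. -/
lemma cnUnion_inl {x : {v : V // v ≠ u}} {T : List ({v : V // v ≠ u} ⊕ W)} :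
    Sum.inl x ∈ cnUnion (Replace G u H) T ↔
      (x.1 ∈ cnUnion G (projV (u := u) T) ∨ (projW (u := u) T ≠ [] ∧ x.1 ∈ cn G u)) := by
  rw [mem_cnUnion]
  constructor
  · rintro ⟨s, hs, hx⟩
    rcases s with a | w
    · left
      exact mem_cnUnion.2 ⟨a.1, mem_projV.2 ⟨a, hs, rfl⟩, cn_inl_inl.1 hx⟩
    · right
      refine ⟨?_, cn_inl_inr.1 hx⟩
      intro hnil
      have := (projW_eq_nil_iff.1 hnil) _ hs
      simp at this
  · rintro (h | ⟨hne, hx⟩)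
    · rcases mem_cnUnion.1 h with ⟨c, hc, hxc⟩
      rcases mem_projV.1 hc with ⟨a, ha, rfl⟩
      exact ⟨Sum.inl a, ha, cn_inl_inl.2 hxc⟩
    · rcases List.exists_mem_of_ne_nil _ hne with ⟨w, hw⟩
      exact ⟨Sum.inr w, mem_projW.1 hw, cn_inl_inr.2 hx⟩

/-- Transfer lemma for `inr` membership in `cnUnion`. -/
lemma cnUnion_inr {w : W} {T : List ({v : V // v ≠ u} ⊕ W)} :
    Sum.inr w ∈ cnUnion (Replace G u H) T ↔
      (u ∈ cnUnion G (projV (u := u) T) ∨ w ∈ cnUnion H (projW (u := u) T)) := by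
  rw [mem_cnUnion]
  constructor
  · rintro ⟨s, hs, hx⟩
    rcases s with a | w'
    · left
      exact mem_cnUnion.2 ⟨a.1, mem_projV.2 ⟨a, hs, rfl⟩, cn_inr_inl.1 hx⟩
    · right
      exact mem_cnUnion.2 ⟨w', mem_projW.2 hs, cn_inr_inr.1 hx⟩
  · rintro (h | h)
    · rcases mem_cnUnion.1 h with ⟨c, hc, hxc⟩
      rcases mem_projV.1 hc with ⟨a, ha, rfl⟩
      exact ⟨Sum.inl a, ha, cn_inr_inl.2 hxc⟩
    · rcases mem_cnUnion.1 h with ⟨w', hw', hxw⟩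
      exact ⟨Sum.inr w', mem_projW.1 hw', cn_inr_inr.2 hxw⟩

lemma mem_cnUnion_append {x : V} {L₁ L₂ : List V} :
    x ∈ cnUnion G (L₁ ++ L₂) ↔ x ∈ cnUnion G L₁ ∨ x ∈ cnUnion G L₂ := by
  simp only [mem_cnUnion, List.mem_append]
  constructor
  · rintro ⟨v, (h | h), hx⟩
    · exact Or.inl ⟨v, h, hx⟩
    · exact Or.inr ⟨v, h, hx⟩
  · rintro (⟨v, h, hx⟩ | ⟨v, h, hx⟩)
    · exact ⟨v, Or.inl h, hx⟩
    · exact ⟨v, Or.inr h, hx⟩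

lemma mem_cnUnion_cons {x v : V} {L : List V} :
    x ∈ cnUnion G (v :: L) ↔ x ∈ cn G v ∨ x ∈ cnUnion G L := by
  simp only [mem_cnUnion, List.mem_cons]
  constructor
  · rintro ⟨s, (rfl | h), hx⟩
    · exact Or.inl hx
    · exact Or.inr ⟨s, h, hx⟩
  · rintro (h | ⟨s, h, hx⟩)
    · exact ⟨v, Or.inl rfl, h⟩
    · exact ⟨s, Or.inr h, hx⟩

/-- Splitting lemma for filterMap. -/
lemma filterMap_split {α β : Type*} {f : α → Option β} {T : List α} {L R : List β} {v : β}
    (h : T.filterMap f = L ++ v :: R) :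
    ∃ X a Y, T = X ++ a :: Y ∧ X.filterMap f = L ∧ f a = some v ∧ Y.filterMap f = R := by
  rcases List.filterMap_eq_append_iff.1 h with ⟨l₁, l₂, rfl, h₁, h₂⟩
  rcases List.filterMap_eq_cons_iff.1 h₂ with ⟨l₁', a, l₂', rfl, hnone, ha, hl₂'⟩
  refine ⟨l₁ ++ l₁', a, l₂', by simp, ?_, ha, hl₂'⟩
  rw [List.filterMap_append, h₁, List.filterMap_eq_nil_iff.2 hnone, List.append_nil]

/-- A compositional legality lemma. -/
lemma leg_append' {V : Type*} {G : SimpleGraph V} {A B : List V} (hA : Leg G A)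
    (hB : ∀ L v R, B = L ++ v :: R → ∃ x ∈ cn G v, x ∉ cnUnion G (A ++ L)) :
    Leg G (A ++ B) := by
  intro L v R h
  rcases List.append_eq_append_iff.1 h with ⟨a', hL, hvR⟩ | ⟨c', hA', hvR⟩
  · subst hL
    exact hB a' v R hvR
  · cases c' with
    | nil =>
      simp at hA' hvR
      subst hA'
      rcases hB [] v R (by simpa using hvR.symm) with ⟨x, hx1, hx2⟩
      exact ⟨x, hx1, by simpa using hx2⟩
    | cons y c'' =>
      rcases List.cons_eq_cons.1 hvR with ⟨rfl, hR⟩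
      exact hA L v c'' (by rw [hA'])

end Transfer
end GrundyDom

namespace GrundyDom
section Lower

variable {V W : Type*} [DecidableEq V] {G : SimpleGraph V} {u : V} {H : SimpleGraph W}

lemma append_split {α : Type*} {M N L R : List α} {v : α} (h : M ++ N = L ++ v :: R) :
    (∃ R', M = L ++ v :: R' ∧ R = R' ++ N) ∨ (∃ L', L = M ++ L' ∧ N = L' ++ v :: R) := by
  rcases List.append_eq_append_iff.1 h with ⟨a', h1, h2⟩ | ⟨c', h1, h2⟩
  · exact Or.inr ⟨a', h1, h2⟩
  · cases c' with
    | nil =>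
      simp at h1 h2
      exact Or.inr ⟨[], by simp [h1], h2.symm⟩
    | cons y c'' =>
      rcases List.cons_eq_cons.1 h2 with ⟨rfl, hR⟩
      exact Or.inl ⟨c'', h1, hR⟩

/-- Lift of vertices of `G - u` into the replacement graph. -/
def liftV (u : V) (W : Type*) : V → Option ({v : V // v ≠ u} ⊕ W) :=
  fun v => if h : v = u then none else some (Sum.inl ⟨v, h⟩)

def fmV (u : V) (W : Type*) (L : List V) : List ({v : V // v ≠ u} ⊕ W) :=
  L.filterMap (liftV u W)

lemma fmV_eq_map {L : List V} (hu : u ∉ L) :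
    ∃ L' : List {v : V // v ≠ u}, fmV u W L = L'.map Sum.inl ∧ L'.map Subtype.val = L := by
  induction L with
  | nil => exact ⟨[], rfl, rfl⟩
  | cons c L ih =>
    have hc : c ≠ u := fun h => hu (h ▸ (List.mem_cons_self : c ∈ c :: L))
    rcases ih (fun h => hu (List.mem_cons_of_mem c h)) with ⟨L', h1, h2⟩
    exact ⟨⟨c, hc⟩ :: L', by simp [fmV, liftV, hc] at h1 ⊢; exact h1, by simp [h2]⟩

lemma projV_fmV {L : List V} (hu : u ∉ L) : projV (u := u) (fmV u W L) = L := by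
  induction L with
  | nil => rfl
  | cons c L ih =>
    have hc : c ≠ u := fun h => hu (h ▸ (List.mem_cons_self : c ∈ c :: L))
    have := ih (fun h => hu (List.mem_cons_of_mem c h))
    simp [fmV, liftV, hc] at this ⊢
    exact this

lemma projW_fmV {L : List V} : projW (u := u) (fmV u W L) = [] := by
  induction L with
  | nil => rfl
  | cons c L ih =>
    by_cases hc : c = u <;> simp [fmV, liftV, hc] at ih ⊢ <;> exact ih

lemma length_fmV {L : List V} (hu : u ∉ L) : (fmV u W L).length = L.length := by
  induction L with
  | nil => rfl
  | cons c L ih =>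
    have hc : c ≠ u := fun h => hu (h ▸ (List.mem_cons_self : c ∈ c :: L))
    have := ih (fun h => hu (List.mem_cons_of_mem c h))
    simp [fmV, liftV, hc] at this ⊢
    exact this

lemma mem_fmV {L : List V} {c : V} (hc : c ≠ u) (h : c ∈ L) :
    Sum.inl (⟨c, hc⟩ : {v : V // v ≠ u}) ∈ fmV u W L := by
  rw [fmV, List.mem_filterMap]
  exact ⟨c, h, by simp [liftV, hc]⟩

lemma cnUnion_fmV_inl {L : List V} (hu : u ∉ L) {x : {v : V // v ≠ u}} :
    Sum.inl x ∈ cnUnion (Replace G u H) (fmV u W L) ↔ x.1 ∈ cnUnion G L := by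
  rw [cnUnion_inl, projV_fmV hu, projW_fmV]
  simp

lemma cnUnion_fmV_inr {L : List V} (hu : u ∉ L) {w : W} :
    Sum.inr w ∈ cnUnion (Replace G u H) (fmV u W L) ↔ u ∈ cnUnion G L := by
  rw [cnUnion_inr, projV_fmV hu, projW_fmV]
  simp [cnUnion]

lemma nodup_fmV {L : List V} (h : L.Nodup) : (fmV u W L).Nodup := by
  apply h.filterMap
  intro a a' b ha ha'
  unfold liftV at ha ha'
  split at ha
  · exact absurd ha (by simp)
  · split at ha'
    · exact absurd ha' (by simp)
    · rw [Option.mem_def, Option.some_inj] at ha ha'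
      have := ha.trans ha'.symm
      rw [Sum.inl.injEq, Subtype.mk.injEq] at this
      exact this

/-- Splitting a fmV list. -/
lemma fmV_split {L : List V} (hu : u ∉ L) {L₁ R₁ : List ({v : V // v ≠ u} ⊕ W)}
    {vv : {v : V // v ≠ u} ⊕ W} (h : fmV u W L = L₁ ++ vv :: R₁) :
    ∃ (X : List V) (a : {v : V // v ≠ u}) (Y : List V), L = X ++ a.1 :: Y ∧
      fmV u W X = L₁ ∧ vv = Sum.inl a ∧ u ∉ X := by
  rcases filterMap_split h with ⟨X, c, Y, rfl, hX, hc, hY⟩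
  unfold liftV at hc
  split at hc
  · exact absurd hc (by simp)
  · next hcu =>
    simp at hc
    exact ⟨X, ⟨c, hcu⟩, Y, rfl, hX, hc.symm, fun hx => hu (List.mem_append_left _ hx)⟩

end Lower
end GrundyDom

namespace GrundyDom
section Lower2

variable {V W : Type*} [DecidableEq V] {G : SimpleGraph V} {u : V} {H : SimpleGraph W}

lemma not_mem_cnUnion_nil {α : Type*} {G₀ : SimpleGraph α} {x : α} :
    x ∉ cnUnion G₀ ([] : List α) := by
  rw [mem_cnUnion]; simp

lemma mem_fmV_iff {L : List V} {ss : {v : V // v ≠ u} ⊕ W} :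
    ss ∈ fmV u W L ↔ ∃ a : {v : V // v ≠ u}, ss = Sum.inl a ∧ a.1 ∈ L := by
  rw [fmV, List.mem_filterMap]
  constructor
  · rintro ⟨c, hc, hsome⟩
    unfold liftV at hsome
    split at hsome
    · simp at hsome
    · next hcu => simp at hsome; exact ⟨⟨c, hcu⟩, hsome.symm, hc⟩
  · rintro ⟨a, rfl, ha⟩
    exact ⟨a.1, ha, by simp [liftV, a.2]⟩

lemma projV_map_inr {M : List W} : projV (u := u) (M.map Sum.inr) = [] := by
  induction M with
  | nil => rfl
  | cons w M ih => simpa using ih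

lemma projW_map_inr {M : List W} : projW (u := u) (M.map Sum.inr) = M := by
  induction M with
  | nil => rfl
  | cons w M ih => simpa using ih

lemma cnUnion_map_inr_inr {M : List W} {w : W} :
    Sum.inr w ∈ cnUnion (Replace G u H) (M.map Sum.inr) ↔ w ∈ cnUnion H M := by
  rw [cnUnion_inr, projV_map_inr, projW_map_inr]
  have : ¬ u ∈ cnUnion G ([] : List V) := not_mem_cnUnion_nil
  tauto

lemma cnUnion_map_inr_inl {M : List W} {x : {v : V // v ≠ u}} :
    Sum.inl x ∈ cnUnion (Replace G u H) (M.map Sum.inr) ↔ (M ≠ [] ∧ x.1 ∈ cn G u) := by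
  rw [cnUnion_inl, projV_map_inr, projW_map_inr]
  have : ¬ (x.1 : V) ∈ cnUnion G ([] : List V) := not_mem_cnUnion_nil
  tauto

lemma map_inr_split {M : List W} {L₁ R₁ : List ({v : V // v ≠ u} ⊕ W)}
    {vv : {v : V // v ≠ u} ⊕ W} (h : M.map Sum.inr = L₁ ++ vv :: R₁) :
    ∃ M₁ w M₂, M = M₁ ++ w :: M₂ ∧ L₁ = M₁.map Sum.inr ∧ vv = Sum.inr w ∧
      R₁ = M₂.map Sum.inr := by
  have e : ∀ (M : List W), M.filterMap (fun w => some (Sum.inr w : {v : V // v ≠ u} ⊕ W))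
      = M.map Sum.inr := by
    intro M; induction M with
    | nil => rfl
    | cons a M ih => simp [List.filterMap_cons, ih]
  have h' : M.filterMap (fun w => some (Sum.inr w : {v : V // v ≠ u} ⊕ W)) = L₁ ++ vv :: R₁ := by
    rw [e]; exact h
  rcases filterMap_split h' with ⟨M₁, w, M₂, rfl, hM₁, hw, hM₂⟩
  simp at hw
  refine ⟨M₁, w, M₂, rfl, ?_, hw.symm, ?_⟩
  · rw [← hM₁, e]
  · rw [← hM₂, e]

lemma legA {S : List V} (hS : IsLegal G S) (huS : u ∉ S) (w0 : W) :
    IsLegal (Replace G u H) (fmV u W S) := by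
  rcases isLegal_iff.1 hS with ⟨hnd, hleg, hdom⟩
  refine isLegal_iff.2 ⟨nodup_fmV hnd, ?_, ?_⟩
  · intro L1 vv R1 hsplit
    rcases fmV_split huS hsplit with ⟨X, a, Y, hL, hX, rfl, huX⟩
    rcases hleg X a.1 Y hL with ⟨x, hx1, hx2⟩
    by_cases hxu : x = u
    · subst hxu
      refine ⟨Sum.inr w0, cn_inr_inl.2 hx1, ?_⟩
      rw [← hX, cnUnion_fmV_inr huX]
      exact hx2
    · refine ⟨Sum.inl ⟨x, hxu⟩, cn_inl_inl.2 hx1, ?_⟩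
      rw [← hX, cnUnion_fmV_inl huX]
      exact hx2
  · rintro (b | w)
    · rcases hdom b.1 with ⟨s, hs, hbs⟩
      have hsu : s ≠ u := fun h => huS (h ▸ hs)
      exact ⟨Sum.inl ⟨s, hsu⟩, mem_fmV hsu hs, cn_inl_inl.2 hbs⟩
    · rcases hdom u with ⟨s, hs, hus⟩
      have hsu : s ≠ u := fun h => huS (h ▸ hs)
      exact ⟨Sum.inl ⟨s, hsu⟩, mem_fmV hsu hs, cn_inr_inl.2 hus⟩

lemma legBC {S L R : List V} {SH : List W} (hS : IsLegal G S) (hsp : S = L ++ u :: R)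
    (hndH : SH.Nodup) (hlegH : Leg H SH) (hne : SH ≠ [])
    (hdomW : ∀ w : W, w ∈ cnUnion H SH ∨ ∃ s ∈ L ++ R, u ∈ cn G s)
    (hblk : 2 ≤ SH.length → u ∉ cnUnion G L) :
    IsLegal (Replace G u H) (fmV u W L ++ SH.map Sum.inr ++ fmV u W R) := by
  rcases isLegal_iff.1 hS with ⟨hnd, hleg, hdom⟩
  rw [hsp] at hnd
  have hnd' := List.nodup_middle.1 hnd
  have huLR : u ∉ L ++ R := (List.nodup_cons.1 hnd').1
  have hndLR : (L ++ R).Nodup := (List.nodup_cons.1 hnd').2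
  have huL : u ∉ L := fun h => huLR (List.mem_append_left _ h)
  have huR : u ∉ R := fun h => huLR (List.mem_append_right _ h)
  rcases List.exists_mem_of_ne_nil _ hne with ⟨whead, hwhead⟩
  refine isLegal_iff.2 ⟨?_, ?_, ?_⟩
  · -- Nodup
    rw [List.nodup_append, List.nodup_append]
    refine ⟨⟨nodup_fmV ((List.nodup_append.1 hndLR).1), hndH.map Sum.inr_injective, ?_⟩,
      nodup_fmV ((List.nodup_append.1 hndLR).2.1), ?_⟩
    · intro s hs t hs' hst
      subst hst
      rcases mem_fmV_iff.1 hs with ⟨a, rfl, _⟩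
      rcases List.mem_map.1 hs' with ⟨w, _, hw⟩
      simp at hw
    · intro s hs t hs' hst
      subst hst
      rcases List.mem_append.1 hs with hs | hs
      · rcases mem_fmV_iff.1 hs with ⟨a, rfl, ha⟩
        rcases mem_fmV_iff.1 hs' with ⟨a', ha', ha2⟩
        rw [Sum.inl.injEq] at ha'
        subst ha'
        exact (List.disjoint_of_nodup_append hndLR) ha ha2
      · rcases List.mem_map.1 hs with ⟨w, _, rfl⟩
        rcases mem_fmV_iff.1 hs' with ⟨a', ha', _⟩
        simp at ha'
  · -- Legality
    apply leg_append'
    · apply leg_append'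
      · -- Leg (fmV L)
        intro L1 vvv R1 hsplit
        rcases fmV_split huL hsplit with ⟨X, a, Y, hL, hX, rfl, huX⟩
        have : S = X ++ a.1 :: (Y ++ u :: R) := by rw [hsp, hL]; simp
        rcases hleg X a.1 _ this with ⟨x, hx1, hx2⟩
        by_cases hxu : x = u
        · subst hxu
          refine ⟨Sum.inr whead, cn_inr_inl.2 hx1, ?_⟩
          rw [← hX, cnUnion_fmV_inr huX]
          exact hx2
        · refine ⟨Sum.inl ⟨x, hxu⟩, cn_inl_inl.2 hx1, ?_⟩
          rw [← hX, cnUnion_fmV_inl huX]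
          exact hx2
      · -- block elements
        intro L1 vvv R1 hsplit
        rcases map_inr_split hsplit with ⟨M₁, w, M₂, hM, rfl, rfl, rfl⟩
        cases M₁ with
        | nil =>
          -- first block element: use u's legality in S
          rcases hleg L u R hsp with ⟨x, hx1, hx2⟩
          by_cases hxu : x = u
          · subst hxu
            refine ⟨Sum.inr w, self_mem_cn, ?_⟩
            rw [List.map_nil, List.append_nil, cnUnion_fmV_inr huL]
            exact hx2
          · refine ⟨Sum.inl ⟨x, hxu⟩, cn_inl_inr.2 hx1, ?_⟩
            rw [List.map_nil, List.append_nil, cnUnion_fmV_inl huL]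
            exact hx2
        | cons w1 M₁' =>
          -- later block element: use H-legality
          have hlen2 : 2 ≤ SH.length := by rw [hM]; simp; omega
          have huL2 := hblk hlen2
          rcases hlegH (w1 :: M₁') w M₂ hM with ⟨w', hw1, hw2⟩
          refine ⟨Sum.inr w', cn_inr_inr.2 hw1, ?_⟩
          intro hmem
          rcases mem_cnUnion.1 hmem with ⟨s, hs, hxs⟩
          rcases List.mem_append.1 hs with hs | hs
          · rcases mem_fmV_iff.1 hs with ⟨a, rfl, ha⟩
            exact huL2 (mem_cnUnion.2 ⟨a.1, ha, cn_inr_inl.1 hxs⟩)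
          · rcases List.mem_map.1 hs with ⟨wi, hwi, rfl⟩
            exact hw2 (mem_cnUnion.2 ⟨wi, hwi, cn_inr_inr.1 hxs⟩)
    · -- suffix fmV R
      intro L1 vvv R1 hsplit
      rcases fmV_split huR hsplit with ⟨X, a, Y, hR, hX, rfl, huX⟩
      have hXL : u ∉ L ++ u :: X → False := by intro h; exact h (by simp)
      have : S = (L ++ u :: X) ++ a.1 :: Y := by rw [hsp, hR]; simp
      rcases hleg _ a.1 _ this with ⟨x, hx1, hx2⟩
      have hx2L : x ∉ cnUnion G L := fun h => hx2 (by
        rcases mem_cnUnion.1 h with ⟨s, hs, hxs⟩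
        exact mem_cnUnion.2 ⟨s, by simp [hs], hxs⟩)
      have hx2u : x ∉ cn G u := fun h => hx2 (mem_cnUnion.2 ⟨u, by simp, h⟩)
      have hx2X : x ∉ cnUnion G X := fun h => hx2 (by
        rcases mem_cnUnion.1 h with ⟨s, hs, hxs⟩
        exact mem_cnUnion.2 ⟨s, by simp [hs], hxs⟩)
      have hxu : x ≠ u := fun h => hx2u (h ▸ self_mem_cn)
      refine ⟨Sum.inl ⟨x, hxu⟩, cn_inl_inl.2 hx1, ?_⟩
      intro hmem
      rcases mem_cnUnion.1 hmem with ⟨s, hs, hxs⟩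
      rcases List.mem_append.1 hs with hs | hs
      · rcases List.mem_append.1 hs with hs | hs
        · rcases mem_fmV_iff.1 hs with ⟨a', rfl, ha'⟩
          exact hx2L (mem_cnUnion.2 ⟨a'.1, ha', cn_inl_inl.1 hxs⟩)
        · rcases List.mem_map.1 hs with ⟨wi, hwi, rfl⟩
          exact hx2u (cn_inl_inr.1 hxs)
      · rw [← hX] at hs
        rcases mem_fmV_iff.1 hs with ⟨a', rfl, ha'⟩
        exact hx2X (mem_cnUnion.2 ⟨a'.1, ha', cn_inl_inl.1 hxs⟩)
  · -- Domination
    rintro (b | w)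
    · rcases hdom b.1 with ⟨s, hs, hbs⟩
      rw [hsp] at hs
      by_cases hsu : s = u
      · subst hsu
        exact ⟨Sum.inr whead, List.mem_append_left _ (List.mem_append_right _
          (List.mem_map_of_mem hwhead)), cn_inl_inr.2 hbs⟩
      · have hs' : s ∈ L ++ R := by
          rcases List.mem_append.1 hs with h | h
          · exact List.mem_append_left _ h
          · rcases List.mem_cons.1 h with h | h
            · exact absurd h hsu
            · exact List.mem_append_right _ h
        rcases List.mem_append.1 hs' with h | h
        · exact ⟨Sum.inl ⟨s, hsu⟩, List.mem_append_left _ (List.mem_append_left _ (mem_fmV hsu h)), cn_inl_inl.2 hbs⟩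
        · exact ⟨Sum.inl ⟨s, hsu⟩, List.mem_append_right _ (mem_fmV hsu h), cn_inl_inl.2 hbs⟩
    · rcases hdomW w with h | ⟨s, hs, hus⟩
      · rcases mem_cnUnion.1 h with ⟨wi, hwi, hw⟩
        exact ⟨Sum.inr wi, List.mem_append_left _ (List.mem_append_right _
          (List.mem_map_of_mem hwi)), cn_inr_inr.2 hw⟩
      · have hsu : s ≠ u := fun h => huLR (h ▸ hs)
        rcases List.mem_append.1 hs with h | h
        · exact ⟨Sum.inl ⟨s, hsu⟩, List.mem_append_left _ (List.mem_append_left _ (mem_fmV hsu h)), cn_inr_inl.2 hus⟩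
        · exact ⟨Sum.inl ⟨s, hsu⟩, List.mem_append_right _ (mem_fmV hsu h), cn_inr_inl.2 hus⟩

end Lower2
end GrundyDom

namespace GrundyDom
section LowerMain

variable {V W : Type*} [DecidableEq V] {G : SimpleGraph V} {u : V} {H : SimpleGraph W}

lemma leg_singleton {w : W} : Leg H [w] := by
  intro L v R h
  cases L with
  | nil =>
    have : v = w := by
      have := congrArg (fun l => l.head?) h
      simpa using this.symm
    subst this
    exact ⟨v, self_mem_cn, not_mem_cnUnion_nil⟩
  | cons y L' =>
    exfalso
    have := congrArg List.length h
    simp at this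
    try omega

lemma lower1 [Fintype V] [Fintype W] [Nonempty W] :
    gammaGr G ≤ gammaGr (Replace G u H) := by
  have : Nonempty V := ⟨u⟩
  rcases gammaGr_spec (G := G) with ⟨S, hS, hlen⟩
  rw [← hlen]
  by_cases huS : u ∈ S
  · rcases List.append_of_mem huS with ⟨L, R, rfl⟩
    have hnd := hS.nodup
    have hnd' := List.nodup_middle.1 hnd
    have huLR : u ∉ L ++ R := (List.nodup_cons.1 hnd').1
    have huL : u ∉ L := fun h => huLR (List.mem_append_left _ h)
    have huR : u ∉ R := fun h => huLR (List.mem_append_right _ h)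
    by_cases hadj : ∃ s ∈ L ++ R, u ∈ cn G s
    · have w0 : W := Classical.arbitrary W
      have hrep := legBC (H := H) (SH := [w0]) hS rfl (List.nodup_singleton w0) leg_singleton
        (by simp) (fun w => Or.inr hadj) (by intro h; simp at h)
      have := le_gammaGr hrep
      calc (L ++ u :: R).length ≤ (fmV u W L ++ [w0].map Sum.inr ++ fmV u W R).length := by
            simp [length_fmV huL, length_fmV huR]
      _ ≤ _ := this
    · push_neg at hadj
      rcases gammaGr_spec (G := H) with ⟨SH, hSH, hlenH⟩
      have hSHne : SH ≠ [] := by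
        intro h
        rcases hSH.dominates (Classical.arbitrary W) with ⟨s, hs, -⟩
        subst h; simp at hs
      have hrep := legBC (H := H) (SH := SH) hS rfl hSH.nodup (isLegal_iff.1 hSH).2.1 hSHne
        (fun w => Or.inl (by rcases hSH.dominates w with ⟨s, hs, hws⟩; exact mem_cnUnion.2 ⟨s, hs, hws⟩))
        (fun _ => by
          intro hc
          rcases mem_cnUnion.1 hc with ⟨s, hs, hus⟩
          exact hadj s (List.mem_append_left _ hs) hus)
      have := le_gammaGr hrep
      have h1 : 1 ≤ SH.length := by
        have : 0 < SH.length := List.length_pos_iff.2 hSHne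
        omega
      calc (L ++ u :: R).length ≤ (fmV u W L ++ SH.map Sum.inr ++ fmV u W R).length := by
            simp [length_fmV huL, length_fmV huR]; omega
      _ ≤ _ := this
  · have w0 : W := Classical.arbitrary W
    have hrep := legA (H := H) hS huS w0
    have := le_gammaGr hrep
    rwa [length_fmV huS] at this

lemma lower2 [Fintype V] [Fintype W] [Nonempty W] :
    gammaGrVert G u + gammaGr H ≤ gammaGr (Replace G u H) + 1 := by
  have : Nonempty V := ⟨u⟩
  rcases gammaGrVert_spec (G := G) (u := u) with ⟨S, hS, hsf, hlen⟩
  rcases mem_selfFoot.1 hsf with ⟨L, R, rfl, hucn⟩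
  have hnd := hS.nodup
  have hnd' := List.nodup_middle.1 hnd
  have huLR : u ∉ L ++ R := (List.nodup_cons.1 hnd').1
  have huL : u ∉ L := fun h => huLR (List.mem_append_left _ h)
  have huR : u ∉ R := fun h => huLR (List.mem_append_right _ h)
  rcases gammaGr_spec (G := H) with ⟨SH, hSH, hlenH⟩
  have hSHne : SH ≠ [] := by
    intro h
    rcases hSH.dominates (Classical.arbitrary W) with ⟨s, hs, -⟩
    subst h; simp at hs
  have hrep := legBC (H := H) (SH := SH) hS rfl hSH.nodup (isLegal_iff.1 hSH).2.1 hSHne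
    (fun w => Or.inl (by rcases hSH.dominates w with ⟨s, hs, hws⟩; exact mem_cnUnion.2 ⟨s, hs, hws⟩))
    (fun _ => hucn)
  have hle := le_gammaGr hrep
  have hlform : (fmV u W L ++ SH.map Sum.inr ++ fmV u W R).length
      = L.length + SH.length + R.length := by
    simp [length_fmV huL, length_fmV huR]
    omega
  have hSlen : (L ++ u :: R).length = L.length + R.length + 1 := by simp; omega
  omega

end LowerMain
end GrundyDom

namespace GrundyDom
section Upper

variable {V W : Type*} [DecidableEq V] {G : SimpleGraph V} {u : V} {H : SimpleGraph W}

lemma projV_split {T : List ({v : V // v ≠ u} ⊕ W)} {L₁ R₁ : List V} {c : V}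
    (h : projV (u := u) T = L₁ ++ c :: R₁) :
    ∃ X, ∃ a : {v : V // v ≠ u}, ∃ Y, T = X ++ Sum.inl a :: Y ∧ projV (u := u) X = L₁ ∧
      a.1 = c ∧ projV (u := u) Y = R₁ := by
  rcases filterMap_split h with ⟨X, s, Y, rfl, hX, hs, hY⟩
  rcases s with a | w
  · simp at hs
    exact ⟨X, a, Y, rfl, hX, hs, hY⟩
  · simp at hs

lemma projW_split {T : List ({v : V // v ≠ u} ⊕ W)} {L₁ R₁ : List W} {w : W}
    (h : projW (u := u) T = L₁ ++ w :: R₁) :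
    ∃ X Y, T = X ++ Sum.inr w :: Y ∧ projW (u := u) X = L₁ ∧ projW (u := u) Y = R₁ := by
  rcases filterMap_split h with ⟨X, s, Y, rfl, hX, hs, hY⟩
  rcases s with a | w'
  · simp at hs
  · simp at hs
    subst hs
    exact ⟨X, Y, rfl, hX, hY⟩

lemma leg_prefix {α : Type*} {G₀ : SimpleGraph α} {A B : List α} (h : Leg G₀ (A ++ B)) :
    Leg G₀ A := by
  intro L v R hs
  exact h L v (R ++ B) (by rw [hs]; simp)

lemma mem_projV_ne_u {T : List ({v : V // v ≠ u} ⊕ W)} {c : V}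
    (h : c ∈ projV (u := u) T) : c ≠ u := by
  rcases mem_projV.1 h with ⟨a, _, rfl⟩
  exact a.2

lemma nodup_projV {T : List ({v : V // v ≠ u} ⊕ W)} (h : T.Nodup) :
    (projV (u := u) T).Nodup := by
  apply h.filterMap
  rintro (a | w) (a' | w') b h1 h2 <;> simp at h1 h2
  rw [← h1] at h2
  exact congrArg Sum.inl (Subtype.ext h2).symm

lemma nodup_projW {T : List ({v : V // v ≠ u} ⊕ W)} (h : T.Nodup) :
    (projW (u := u) T).Nodup := by
  apply h.filterMap
  rintro (a | w) (a' | w') b h1 h2 <;> simp at h1 h2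
  subst h1; subst h2
  rfl

/-- The projection to G of a legal sequence is legal in G. -/
lemma leg_projV_of_leg {T : List ({v : V // v ≠ u} ⊕ W)}
    (hT : Leg (Replace G u H) T) : Leg G (projV (u := u) T) := by
  intro L₁ c R₁ hs
  rcases projV_split hs with ⟨X, a, Y, rfl, hX, rfl, hY⟩
  rcases hT X (Sum.inl a) Y rfl with ⟨y, hy1, hy2⟩
  rcases y with x | w'
  · refine ⟨x.1, cn_inl_inl.1 hy1, ?_⟩
    rw [← hX]
    intro hc
    exact hy2 (cnUnion_inl.2 (Or.inl hc))
  · refine ⟨u, cn_inr_inl.1 hy1, ?_⟩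
    rw [← hX]
    intro hc
    exact hy2 (cnUnion_inr.2 (Or.inl hc))

/-- The projection to H of a legal sequence is legal in H. -/
lemma leg_projW_of_leg {T : List ({v : V // v ≠ u} ⊕ W)}
    (hT : Leg (Replace G u H) T) : Leg H (projW (u := u) T) := by
  intro L₁ wj R₁ hs
  rcases projW_split hs with ⟨X, Y, rfl, hX, hY⟩
  cases L₁ with
  | nil => exact ⟨wj, self_mem_cn, not_mem_cnUnion_nil⟩
  | cons wa LA =>
    have hXa : ∃ wfirst, Sum.inr wfirst ∈ X := by
      have : wa ∈ projW (u := u) X := by rw [hX]; simp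
      exact ⟨wa, mem_projW.1 this⟩
    rcases hT X (Sum.inr wj) Y rfl with ⟨y, hy1, hy2⟩
    rcases y with x | w'
    · exfalso
      rcases hXa with ⟨wf, hwf⟩
      exact hy2 (mem_cnUnion.2 ⟨Sum.inr wf, hwf, cn_inl_inr.2 (cn_inl_inr.1 hy1)⟩)
    · refine ⟨w', cn_inr_inr.1 hy1, ?_⟩
      rw [← hX]
      intro hc
      exact hy2 (cnUnion_inr.2 (Or.inr hc))

/-- Case D (no copy vertices used): the projection is legal dominating in G. -/
lemma upperD [Nonempty W] {T : List ({v : V // v ≠ u} ⊕ W)}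
    (hT : IsLegal (Replace G u H) T) (hW : projW (u := u) T = []) :
    IsLegal G (projV (u := u) T) := by
  rcases isLegal_iff.1 hT with ⟨hnd, hleg, hdom⟩
  refine isLegal_iff.2 ⟨nodup_projV hnd, leg_projV_of_leg hleg, ?_⟩
  intro v
  by_cases hv : v = u
  · rw [hv]
    rcases hdom (Sum.inr (Classical.arbitrary W)) with ⟨s, hs, hmem⟩
    rcases s with c | w
    · exact ⟨c.1, mem_projV.2 ⟨c, hs, rfl⟩, cn_inr_inl.1 hmem⟩
    · exfalso
      have : w ∈ projW (u := u) T := mem_projW.2 hs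
      rw [hW] at this
      simp at this
  · rcases hdom (Sum.inl ⟨v, hv⟩) with ⟨s, hs, hmem⟩
    rcases s with c | w
    · exact ⟨c.1, mem_projV.2 ⟨c, hs, rfl⟩, cn_inl_inl.1 hmem⟩
    · exfalso
      have : w ∈ projW (u := u) T := mem_projW.2 hs
      rw [hW] at this
      simp at this

end Upper
end GrundyDom

namespace GrundyDom
section Upper2

variable {V W : Type*} [DecidableEq V] {G : SimpleGraph V} {u : V} {H : SimpleGraph W}

/-- Assembly of a legal dominating sequence of `G` of the form `projV P ++ u :: Z`. -/
lemma buildSG {P : List ({v : V // v ≠ u} ⊕ W)} {Z : List V}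
    (hndZ : (projV (u := u) P ++ Z).Nodup) (hZu : ∀ c ∈ Z, c ≠ u)
    (hlegP : Leg G (projV (u := u) P))
    (hslot : ∃ x0, x0 ∈ cn G u ∧ x0 ∉ cnUnion G (projV (u := u) P))
    (hprivZ : ∀ L1 c R1, Z = L1 ++ c :: R1 → ∃ x, x ∈ cn G c ∧
      x ∉ cnUnion G (projV (u := u) P) ∧ x ∉ cn G u ∧ x ∉ cnUnion G L1)
    (hdomZ : ∀ v, v ≠ u → ((∃ s ∈ projV (u := u) P ++ Z, v ∈ cn G s) ∨ v ∈ cn G u)) :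
    IsLegal G (projV (u := u) P ++ u :: Z) := by
  have hunotin : u ∉ projV (u := u) P ++ Z := by
    intro h
    rcases List.mem_append.1 h with h | h
    · exact mem_projV_ne_u h rfl
    · exact hZu u h rfl
  refine isLegal_iff.2 ⟨?_, ?_, ?_⟩
  · exact List.nodup_middle.2 (List.nodup_cons.2 ⟨hunotin, hndZ⟩)
  · apply leg_append' hlegP
    intro L1 v R1 hBs
    cases L1 with
    | nil =>
      rcases List.cons_eq_cons.1 hBs with ⟨rfl, rfl⟩
      rcases hslot with ⟨x0, hx1, hx2⟩
      exact ⟨x0, hx1, by simpa using hx2⟩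
    | cons y L1' =>
      rcases List.cons_eq_cons.1 hBs with ⟨rfl, hZ⟩
      rcases hprivZ L1' v R1 hZ with ⟨x, hx1, hx2, hx3, hx4⟩
      refine ⟨x, hx1, ?_⟩
      intro hc
      rcases mem_cnUnion_append.1 hc with hc | hc
      · exact hx2 hc
      · rcases mem_cnUnion_cons.1 hc with hc | hc
        · exact hx3 hc
        · exact hx4 hc
  · intro v
    by_cases hv : v = u
    · exact ⟨u, by simp, hv ▸ self_mem_cn⟩
    · rcases hdomZ v hv with ⟨s, hs, hvs⟩ | hvu
      · refine ⟨s, ?_, hvs⟩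
        rcases List.mem_append.1 hs with h | h
        · exact List.mem_append_left _ h
        · exact List.mem_append_right _ (List.mem_cons_of_mem _ h)
      · exact ⟨u, by simp, hvu⟩

end Upper2
end GrundyDom

namespace GrundyDom
section Upper3

variable {V W : Type*} [DecidableEq V] {G : SimpleGraph V} {u : V} {H : SimpleGraph W}

lemma inl_priv_transfer {X : List ({v : V // v ≠ u} ⊕ W)} {x : {v : V // v ≠ u}}
    (hw : ∃ w, Sum.inr w ∈ X) (hx2 : Sum.inl x ∉ cnUnion (Replace G u H) X) :
    x.1 ∉ cnUnion G (projV (u := u) X) ∧ x.1 ∉ cn G u := by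
  rcases hw with ⟨w, hw⟩
  exact ⟨fun hc => hx2 (cnUnion_inl.2 (Or.inl hc)),
    fun hc => hx2 (mem_cnUnion.2 ⟨Sum.inr w, hw, cn_inl_inr.2 hc⟩)⟩

lemma upperE [Nonempty W] {P Q : List ({v : V // v ≠ u} ⊕ W)} {w1 : W}
    (hT : IsLegal (Replace G u H) (P ++ Sum.inr w1 :: Q)) (hPW : projW (u := u) P = [])
    (hPu : u ∈ cnUnion G (projV (u := u) P)) :
    IsLegal G (projV (u := u) P ++ u :: projV (u := u) Q) ∧ projW (u := u) Q = [] := by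
  rcases isLegal_iff.1 hT with ⟨hnd, hleg, hdom⟩
  have hcovP : ∀ w'' : W, Sum.inr w'' ∈ cnUnion (Replace G u H) P :=
    fun w'' => cnUnion_inr.2 (Or.inl hPu)
  have hQW : projW (u := u) Q = [] := by
    cases hq : projW (u := u) Q with
    | nil => rfl
    | cons wj rest =>
      exfalso
      rcases projW_split (L₁ := []) (by simpa using hq) with ⟨X1, Y1, rfl, hX1, hY1⟩
      rcases hleg (P ++ Sum.inr w1 :: X1) (Sum.inr wj) Y1 (by simp) with ⟨y, hy1, hy2⟩
      rcases y with x | w''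
      · exact hy2 (mem_cnUnion.2 ⟨Sum.inr w1, by simp, cn_inl_inr.2 (cn_inl_inr.1 hy1)⟩)
      · exact hy2 (cnUnion_sub (fun s hs => by simp [hs]) (hcovP w''))
  have hndPQ : (projV (u := u) P ++ projV (u := u) Q).Nodup := by
    have h0 := nodup_projV hnd
    rw [projV_append, projV_cons_inr] at h0
    exact h0
  have hlegP : Leg G (projV (u := u) P) := by
    have h0 := leg_projV_of_leg hleg
    rw [projV_append, projV_cons_inr] at h0
    exact leg_prefix h0
  refine ⟨buildSG hndPQ (fun c hc => mem_projV_ne_u hc) hlegP ?_ ?_ ?_, hQW⟩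
  · -- hslot
    rcases hleg P (Sum.inr w1) Q rfl with ⟨y, hy1, hy2⟩
    rcases y with x | w''
    · exact ⟨x.1, cn_inl_inr.1 hy1, fun hc => hy2 (cnUnion_inl.2 (Or.inl hc))⟩
    · exact absurd (hcovP w'') hy2
  · -- hprivZ
    intro L1 c R1 hZ
    rcases projV_split hZ with ⟨Q1, a, Q2, rfl, hQ1, rfl, hQ2⟩
    rcases hleg (P ++ Sum.inr w1 :: Q1) (Sum.inl a) Q2 (by simp) with ⟨y, hy1, hy2⟩
    rcases y with x | w''
    · have htr := inl_priv_transfer ⟨w1, by simp⟩ hy2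
      rw [projV_append, projV_cons_inr, hQ1] at htr
      refine ⟨x.1, cn_inl_inl.1 hy1, ?_, htr.2, ?_⟩
      · intro hc; exact htr.1 (mem_cnUnion_append.2 (Or.inl hc))
      · intro hc; exact htr.1 (mem_cnUnion_append.2 (Or.inr hc))
    · exact absurd (cnUnion_sub (fun s hs => by simp [hs]) (hcovP w'')) hy2
  · -- hdomZ
    intro v hv
    rcases hdom (Sum.inl ⟨v, hv⟩) with ⟨s, hs, hmem⟩
    rcases s with cc | w
    · left
      refine ⟨cc.1, ?_, cn_inl_inl.1 hmem⟩
      rcases List.mem_append.1 hs with h | h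
      · exact List.mem_append_left _ (mem_projV.2 ⟨cc, h, rfl⟩)
      · rcases List.mem_cons.1 h with h | h
        · simp at h
        · exact List.mem_append_right _ (mem_projV.2 ⟨cc, h, rfl⟩)
    · right
      exact cn_inl_inr.1 hmem

end Upper3
end GrundyDom

namespace GrundyDom
section Upper4

variable {V W : Type*} [DecidableEq V] {G : SimpleGraph V} {u : V} {H : SimpleGraph W}

lemma upperF [Fintype V] [Fintype W] [Nonempty W] {P Q : List ({v : V // v ≠ u} ⊕ W)} {w1 : W}
    (hT : IsLegal (Replace G u H) (P ++ Sum.inr w1 :: Q)) (hPW : projW (u := u) P = [])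
    (hPu : u ∉ cnUnion G (projV (u := u) P)) :
    (P ++ Sum.inr w1 :: Q).length + 1 ≤ gammaGrVert G u + gammaGr H := by
  rcases isLegal_iff.1 hT with ⟨hnd, hleg, hdom⟩
  have hndW : (projW (u := u) (P ++ Sum.inr w1 :: Q)).Nodup := nodup_projW hnd
  have hlegH : Leg H (projW (u := u) (P ++ Sum.inr w1 :: Q)) := leg_projW_of_leg hleg
  have hcnt : (projV (u := u) (P ++ Sum.inr w1 :: Q)).length
      + (projW (u := u) (P ++ Sum.inr w1 :: Q)).length = (P ++ Sum.inr w1 :: Q).length :=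
    projV_length_add
  have hPV : projV (u := u) (P ++ Sum.inr w1 :: Q) = projV (u := u) P ++ projV (u := u) Q := by
    rw [projV_append, projV_cons_inr]
  have hPWQ : projW (u := u) (P ++ Sum.inr w1 :: Q) = w1 :: projW (u := u) Q := by
    rw [projW_append, hPW, projW_cons_inr]; rfl
  have hndPQ : (projV (u := u) P ++ projV (u := u) Q).Nodup := by
    have h0 := nodup_projV hnd
    rwa [hPV] at h0
  have hlegP : Leg G (projV (u := u) P) := by
    have h0 := leg_projV_of_leg hleg
    rw [hPV] at h0
    exact leg_prefix h0
  have hslot : ∃ x0, x0 ∈ cn G u ∧ x0 ∉ cnUnion G (projV (u := u) P) :=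
    ⟨u, self_mem_cn, hPu⟩
  have hdomZgen : ∀ (Z : List V),
      (∀ cc : {v : V // v ≠ u}, Sum.inl cc ∈ P ++ Sum.inr w1 :: Q →
        cc.1 ∈ projV (u := u) P ++ Z ∨
          (∀ v : V, ∀ hv : v ≠ u, (Sum.inl (⟨v, hv⟩ : {v : V // v ≠ u}) ∈
            cn (Replace G u H) (Sum.inl cc) → (∃ s ∈ projV (u := u) P ++ Z, v ∈ cn G s) ∨ v ∈ cn G u))) →
      ∀ v, v ≠ u → ((∃ s ∈ projV (u := u) P ++ Z, v ∈ cn G s) ∨ v ∈ cn G u) := by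
    intro Z hcc v hv
    rcases hdom (Sum.inl ⟨v, hv⟩) with ⟨s, hs, hmem⟩
    rcases s with cc | w
    · rcases hcc cc hs with h | h
      · exact Or.inl ⟨cc.1, h, cn_inl_inl.1 hmem⟩
      · exact h v hv hmem
    · exact Or.inr (cn_inl_inr.1 hmem)
  by_cases hspec : ∃ X, ∃ b : {v : V // v ≠ u}, ∃ Y,
      P ++ Sum.inr w1 :: Q = X ++ Sum.inl b :: Y ∧
      ∀ x : {v : V // v ≠ u}, Sum.inl x ∈ cn (Replace G u H) (Sum.inl b) →
        Sum.inl x ∈ cnUnion (Replace G u H) X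
  · -- SPECIAL CASE
    rcases hspec with ⟨X, b, Y, hXY, hbcov⟩
    rcases hleg X (Sum.inl b) Y hXY with ⟨y, hy1, hy2⟩
    rcases y with x | w'
    · exact absurd (hbcov x hy1) hy2
    -- b is adjacent to u, and w' is uncovered in X
    have hbu : u ∈ cn G b.1 := cn_inr_inl.1 hy1
    have hw'X : w' ∉ cnUnion H (projW (u := u) X) :=
      fun hc => hy2 (cnUnion_inr.2 (Or.inr hc))
    -- locate b inside Q
    have hsplit2 := append_split (M := P) (N := Sum.inr w1 :: Q) hXY
    rcases hsplit2 with ⟨R', hP, hY⟩ | ⟨L', hX, hQ⟩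
    · exfalso
      have : b.1 ∈ projV (u := u) P := mem_projV.2 ⟨b, by rw [hP]; simp, rfl⟩
      exact hPu (mem_cnUnion.2 ⟨b.1, this, hbu⟩)
    cases L' with
    | nil =>
      exfalso
      simp at hQ
    | cons s M =>
      rcases List.cons_eq_cons.1 hQ with ⟨hs, hQ2⟩
      subst hs
      simp only [List.append_eq] at hQ2
      -- now X = P ++ inr w1 :: M and Q = M ++ inl b :: Y
      have hXform : X = P ++ Sum.inr w1 :: M := hX
      -- projW Y = []
      have hYW : projW (u := u) Y = [] := by
        cases hqy : projW (u := u) Y with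
        | nil => rfl
        | cons wj rest =>
          exfalso
          rcases projW_split (L₁ := []) (by simpa using hqy) with ⟨Y1, Y2, rfl, hY1, hY2⟩
          rcases hleg (X ++ Sum.inl b :: Y1) (Sum.inr wj) Y2 (by rw [hXY]; simp) with ⟨y2, hy21, hy22⟩
          rcases y2 with x | w''
          · refine hy22 (mem_cnUnion.2 ⟨Sum.inr w1, ?_, cn_inl_inr.2 (cn_inl_inr.1 hy21)⟩)
            rw [hXform]; simp
          · exact hy22 (mem_cnUnion.2 ⟨Sum.inl b, by simp, cn_inr_inl.2 hbu⟩)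
      have hwTX : projW (u := u) (P ++ Sum.inr w1 :: Q) = projW (u := u) X := by
        rw [hXY, projW_append, projW_cons_inl, hYW]
        simp
      have hw'T : w' ∉ cnUnion H (projW (u := u) (P ++ Sum.inr w1 :: Q)) := by
        rw [hwTX]; exact hw'X
      have hb2 : (projW (u := u) (P ++ Sum.inr w1 :: Q)).length + 1 ≤ gammaGr H := by
        have := leg_le_gammaGr (nodup_append_singleton hndW hw'T)
          (leg_append_singleton hlegH hw'T)
        simpa using this
      -- the G-sequence
      have hQV : projV (u := u) Q = projV (u := u) M ++ b.1 :: projV (u := u) Y := by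
        rw [hQ2, projV_append, projV_cons_inl]
      have hXV : projV (u := u) X = projV (u := u) P ++ projV (u := u) M := by
        rw [hXform, projV_append, projV_cons_inr]
      have hndZ : (projV (u := u) P ++ (projV (u := u) M ++ projV (u := u) Y)).Nodup := by
        apply List.Nodup.sublist _ (by rw [hQV] at hndPQ; exact hndPQ)
        apply List.Sublist.append_left
        exact List.Sublist.append_left (List.sublist_cons_self _ _) _
      have hSG : IsLegal G (projV (u := u) P ++ u :: (projV (u := u) M ++ projV (u := u) Y)) := by
        apply buildSG hndZ ?_ hlegP hslot ?_ ?_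
        · intro c hc
          rcases List.mem_append.1 hc with h | h
          · exact mem_projV_ne_u h
          · exact mem_projV_ne_u h
        · -- hprivZ
          intro L1 c R1 hZsp
          rcases append_split hZsp with ⟨R'', hM, hR1⟩ | ⟨L'', hL1, hYsp⟩
          · -- c inside M
            rcases projV_split hM with ⟨M1, a, M2, rfl, hM1, rfl, hM2⟩
            rcases hleg (P ++ Sum.inr w1 :: M1) (Sum.inl a) (M2 ++ Sum.inl b :: Y)
              (by rw [hQ2]; simp) with ⟨y3, hy31, hy32⟩
            rcases y3 with x | w''
            · have htr := inl_priv_transfer ⟨w1, by simp⟩ hy32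
              rw [projV_append, projV_cons_inr, hM1] at htr
              refine ⟨x.1, cn_inl_inl.1 hy31, ?_, htr.2, ?_⟩
              · intro hc; exact htr.1 (mem_cnUnion_append.2 (Or.inl hc))
              · intro hc; exact htr.1 (mem_cnUnion_append.2 (Or.inr hc))
            · -- a would be a second special vertex
              exfalso
              have hau : u ∈ cn G a.1 := cn_inr_inl.1 hy31
              refine hy2 (mem_cnUnion.2 ⟨Sum.inl a, ?_, cn_inr_inl.2 hau⟩)
              rw [hXform]; simp
          · -- c inside Y
            rcases projV_split hYsp with ⟨Y1, a, Y2, rfl, hY1, rfl, hY2⟩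
            rcases hleg (X ++ Sum.inl b :: Y1) (Sum.inl a) Y2
              (by rw [hXY]; simp) with ⟨y3, hy31, hy32⟩
            rcases y3 with x | w''
            · have htr := inl_priv_transfer ⟨w1, by rw [hXform]; simp⟩ hy32
              rw [projV_append, projV_cons_inl, hXV, hY1] at htr
              have hnc := htr.1
              refine ⟨x.1, cn_inl_inl.1 hy31, ?_, htr.2, ?_⟩
              · intro hc
                exact hnc (mem_cnUnion_append.2 (Or.inl (mem_cnUnion_append.2 (Or.inl hc))))
              · rw [hL1]
                intro hc
                rcases mem_cnUnion_append.1 hc with hc | hc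
                · exact hnc (mem_cnUnion_append.2 (Or.inl (mem_cnUnion_append.2 (Or.inr hc))))
                · exact hnc (mem_cnUnion_append.2 (Or.inr (mem_cnUnion_cons.2 (Or.inr hc))))
            · exfalso
              exact hy32 (mem_cnUnion.2 ⟨Sum.inl b, by simp, cn_inr_inl.2 hbu⟩)
        · -- hdomZ
          apply hdomZgen
          intro cc hcc
          rw [hXY] at hcc
          rcases List.mem_append.1 hcc with h | h
          · rw [hXform] at h
            rcases List.mem_append.1 h with h | h
            · exact Or.inl (List.mem_append_left _ (mem_projV.2 ⟨cc, h, rfl⟩))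
            · rcases List.mem_cons.1 h with h | h
              · simp at h
              · exact Or.inl (List.mem_append_right _
                  (List.mem_append_left _ (mem_projV.2 ⟨cc, h, rfl⟩)))
          · rcases List.mem_cons.1 h with h | h
            · -- cc = b : use specialness
              rw [Sum.inl.injEq] at h
              subst h
              right
              intro v hv hmem
              have := hbcov ⟨v, hv⟩ hmem
              rcases cnUnion_inl.1 this with h2 | h2
              · rw [hXV] at h2
                rcases mem_cnUnion.1 h2 with ⟨s, hs, hvs⟩
                refine Or.inl ⟨s, ?_, hvs⟩
                rcases List.mem_append.1 hs with h3 | h3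
                · exact List.mem_append_left _ h3
                · exact List.mem_append_right _ (List.mem_append_left _ h3)
              · exact Or.inr h2.2
            · exact Or.inl (List.mem_append_right _
                (List.mem_append_right _ (mem_projV.2 ⟨cc, h, rfl⟩)))
      have hsf : u ∈ selfFoot G (projV (u := u) P ++ u :: (projV (u := u) M ++ projV (u := u) Y)) :=
        mem_selfFoot.2 ⟨_, _, rfl, hPu⟩
      have hb1 := le_gammaGrVert hSG hsf
      -- counting
      have e1 : (projV (u := u) P ++ u :: (projV (u := u) M ++ projV (u := u) Y)).length
          = (projV (u := u) P).length + (projV (u := u) M).length + (projV (u := u) Y).length + 1 := by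
        simp; omega
      have e2 : (projV (u := u) (P ++ Sum.inr w1 :: Q)).length
          = (projV (u := u) P).length + (projV (u := u) M).length + (projV (u := u) Y).length + 1 := by
        rw [hPV, hQV]; simp; omega
      omega
  · -- NON-SPECIAL CASE
    push_neg at hspec
    have hSG : IsLegal G (projV (u := u) P ++ u :: projV (u := u) Q) := by
      apply buildSG hndPQ (fun c hc => mem_projV_ne_u hc) hlegP hslot ?_ ?_
      · -- hprivZ
        intro L1 c R1 hZ
        rcases projV_split hZ with ⟨Q1, a, Q2, rfl, hQ1, rfl, hQ2⟩
        rcases hspec (P ++ Sum.inr w1 :: Q1) a Q2 (by simp) with ⟨x, hx1, hx2⟩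
        have htr := inl_priv_transfer ⟨w1, by simp⟩ hx2
        rw [projV_append, projV_cons_inr, hQ1] at htr
        refine ⟨x.1, cn_inl_inl.1 hx1, ?_, htr.2, ?_⟩
        · intro hc; exact htr.1 (mem_cnUnion_append.2 (Or.inl hc))
        · intro hc; exact htr.1 (mem_cnUnion_append.2 (Or.inr hc))
      · -- hdomZ
        apply hdomZgen
        intro cc hcc
        left
        rcases List.mem_append.1 hcc with h | h
        · exact List.mem_append_left _ (mem_projV.2 ⟨cc, h, rfl⟩)
        · rcases List.mem_cons.1 h with h | h
          · simp at h
          · exact List.mem_append_right _ (mem_projV.2 ⟨cc, h, rfl⟩)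
    have hsf : u ∈ selfFoot G (projV (u := u) P ++ u :: projV (u := u) Q) :=
      mem_selfFoot.2 ⟨_, _, rfl, hPu⟩
    have hb1 := le_gammaGrVert hSG hsf
    have hb2 : (projW (u := u) (P ++ Sum.inr w1 :: Q)).length ≤ gammaGr H :=
      leg_le_gammaGr hndW hlegH
    have e1 : (projV (u := u) P ++ u :: projV (u := u) Q).length
        = (projV (u := u) P).length + (projV (u := u) Q).length + 1 := by
      simp; omega
    have e2 : (projV (u := u) (P ++ Sum.inr w1 :: Q)).length
        = (projV (u := u) P).length + (projV (u := u) Q).length := by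
      rw [hPV]; simp
    omega

end Upper4
end GrundyDom

namespace GrundyDom
section Final

variable {V W : Type*} [DecidableEq V] {G : SimpleGraph V} {u : V} {H : SimpleGraph W}

lemma gammaGrVert_pos [Fintype V] : 1 ≤ gammaGrVert G u := by
  rcases gammaGrVert_spec (G := G) (u := u) with ⟨S, hS, hsf, -⟩
  have := le_gammaGrVert hS hsf
  rcases mem_selfFoot.1 hsf with ⟨L, R, hsp, -⟩
  have : 1 ≤ S.length := by rw [hsp]; simp; omega
  have h2 := le_gammaGrVert hS hsf
  omega

lemma upper_main [Fintype V] [Fintype W] [Nonempty W] {T : List ({v : V // v ≠ u} ⊕ W)}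
    (hT : IsLegal (Replace G u H) T) :
    T.length ≤ gammaGr G ∨ T.length + 1 ≤ gammaGrVert G u + gammaGr H := by
  cases hW : projW (u := u) T with
  | nil =>
    left
    have hlen : (projV (u := u) T).length = T.length := by
      have := projV_length_add (T := T)
      rw [hW] at this
      simpa using this
    have := le_gammaGr (upperD hT hW)
    omega
  | cons w1 rest =>
    rcases projW_split (L₁ := []) (by simpa using hW) with ⟨P, Q, rfl, hPW, hQW'⟩
    by_cases hPu : u ∈ cnUnion G (projV (u := u) P)
    · left
      rcases upperE hT hPW hPu with ⟨hSG, hQW⟩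
      have hb := le_gammaGr hSG
      have hcnt : (projV (u := u) (P ++ Sum.inr w1 :: Q)).length
          + (projW (u := u) (P ++ Sum.inr w1 :: Q)).length = (P ++ Sum.inr w1 :: Q).length :=
        projV_length_add
      have hPV : (projV (u := u) (P ++ Sum.inr w1 :: Q)).length
          = (projV (u := u) P).length + (projV (u := u) Q).length := by
        rw [projV_append, projV_cons_inr]; simp
      have hPWQ : (projW (u := u) (P ++ Sum.inr w1 :: Q)).length = 1 := by
        rw [projW_append, hPW, projW_cons_inr, hQW]
        rfl
      have e1 : (projV (u := u) P ++ u :: projV (u := u) Q).length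
          = (projV (u := u) P).length + (projV (u := u) Q).length + 1 := by
        simp; omega
      omega
    · right
      exact upperF hT hPW hPu

theorem stmt4' [Fintype V] [Fintype W] [Nonempty W] :
    (gammaGr (Replace G u H) : ℤ) =
      max (gammaGr G : ℤ) ((gammaGrVert G u : ℤ) + (gammaGr H : ℤ) - 1) := by
  have : Nonempty V := ⟨u⟩
  have hNE : Nonempty ({v : V // v ≠ u} ⊕ W) := ⟨Sum.inr (Classical.arbitrary W)⟩
  have hl1 : gammaGr G ≤ gammaGr (Replace G u H) := lower1
  have hl2 : gammaGrVert G u + gammaGr H ≤ gammaGr (Replace G u H) + 1 := lower2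
  have hhp : 1 ≤ gammaGr H := gammaGr_pos
  have hvp : 1 ≤ gammaGrVert G u := gammaGrVert_pos
  rcases gammaGr_spec (G := Replace G u H) with ⟨T, hT, hlen⟩
  have hup := upper_main hT
  rw [hlen] at hup
  rcases hup with hup | hup
  · have heq : gammaGr (Replace G u H) = gammaGr G := le_antisymm hup hl1
    rw [heq, max_eq_left]
    have : (gammaGrVert G u : ℤ) + gammaGr H ≤ (gammaGr G : ℤ) + 1 := by
      exact_mod_cast heq ▸ hl2
    omega
  · have heq : gammaGr (Replace G u H) + 1 = gammaGrVert G u + gammaGr H :=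
      le_antisymm hup hl2
    have heq' : (gammaGr (Replace G u H) : ℤ) = (gammaGrVert G u : ℤ) + gammaGr H - 1 := by
      have : ((gammaGr (Replace G u H) + 1 : ℕ) : ℤ) = ((gammaGrVert G u + gammaGr H : ℕ) : ℤ) := by
        exact_mod_cast heq
      push_cast at this
      omega
    rw [heq', max_eq_right]
    have : (gammaGr G : ℤ) ≤ (gammaGr (Replace G u H) : ℤ) := by exact_mod_cast hl1
    omega

end Final
end GrundyDom


/-- `γ_gr(G_{u ↩ H}) = max { γ_gr(G), γ_gr^u(G) + γ_gr(H) - 1 }`. -/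
theorem stmt4 {V W : Type*} [Fintype V] [DecidableEq V] [Fintype W] [Nonempty W]
    (G : SimpleGraph V) (u : V) (H : SimpleGraph W) :
    (gammaGr (Replace G u H) : ℤ) =
      max (gammaGr G : ℤ) ((gammaGrVert G u : ℤ) + (gammaGr H : ℤ) - 1) := by
  exact stmt4' (G := G) (u := u) (H := H)
end

section
/- The Grundy domination number of a graph G equals the maximum over all independent sets I of G of γ_gr(G, I), i.e. γ_gr(G) = max{γ_gr(G, I) : I independent set of G}. -/
open GrundyDom Finset

lemma mem_cn_self {V : Type*} (G : SimpleGraph V) (v : V) : v ∈ cn G v := Set.mem_insert _ _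

lemma mem_cnUnion_iff {V : Type*} (G : SimpleGraph V) (L : List V) (x : V) :
    x ∈ cnUnion G L ↔ ∃ u ∈ L, x ∈ cn G u := by
  simp [cnUnion]

lemma bddAbove_legal {V : Type*} [Fintype V] (G : SimpleGraph V) :
    BddAbove {k | ∃ S : List V, IsLegal G S ∧ S.length = k} := by
  classical
  refine ⟨Fintype.card V, ?_⟩
  rintro k ⟨S, hS, rfl⟩
  exact hS.nodup.length_le_card

lemma exists_legal {V : Type*} [Fintype V] (G : SimpleGraph V) :
    ∃ S : List V, IsLegal G S := by
  classical
  suffices h : ∀ n (S : List V), S.Nodup →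
      (∀ i : Fin S.length, (PN G S i.val (S.get i)).Nonempty) →
      {v | v ∉ cnUnion G S}.ncard ≤ n → ∃ T, IsLegal G T by
    refine h (Fintype.card V) [] List.nodup_nil (fun i => absurd i.2 (by simp)) ?_
    calc {v : V | v ∉ cnUnion G []}.ncard ≤ (Set.univ : Set V).ncard :=
          Set.ncard_le_ncard (Set.subset_univ _) Set.finite_univ
      _ = Fintype.card V := by simp [Set.ncard_univ]
  intro n
  induction n with
  | zero =>
    intro S hnd hpn hcard
    refine ⟨S, hnd, ?_, hpn⟩
    intro v
    have hv : v ∈ cnUnion G S := by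
      by_contra hv
      have h0 : ({v | v ∉ cnUnion G S}).ncard = 0 := le_antisymm hcard (Nat.zero_le _)
      have hmem : v ∈ {v | v ∉ cnUnion G S} := hv
      rw [(Set.ncard_eq_zero (Set.toFinite _)).mp h0] at hmem
      exact hmem
    exact (mem_cnUnion_iff G S v).mp hv
  | succ n ih =>
    intro S hnd hpn hcard
    by_cases hU : {v | v ∉ cnUnion G S}.Nonempty
    · obtain ⟨v, hv⟩ := hU
      have hv' : v ∉ cnUnion G S := hv
      have hvS : v ∉ S := fun hvS => hv' ((mem_cnUnion_iff G S v).mpr ⟨v, hvS, mem_cn_self G v⟩)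
      refine ih (S ++ [v]) ?_ ?_ ?_
      · simp [List.nodup_append, hnd, hvS]
        exact fun a ha h => hvS (h ▸ ha)
      · intro i
        have hi : i.val < S.length + 1 := by simpa using i.2
        rcases Nat.lt_or_ge i.val S.length with hlt | hge
        · have hget : (S ++ [v]).get i = S.get ⟨i.val, hlt⟩ := by
            simp [List.getElem_append_left hlt]
          have htake : (S ++ [v]).take i.val = S.take i.val :=
            List.take_append_of_le_length (Nat.le_of_lt hlt)
          have := hpn ⟨i.val, hlt⟩
          rw [hget]
          unfold PN at this ⊢
          rw [htake]
          exact this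
        · have hie : i.val = S.length := le_antisymm (Nat.lt_succ_iff.mp hi) hge
          have hget : (S ++ [v]).get i = v := by
            simp [List.getElem_append_right (le_of_eq hie.symm), hie]
          have htake : (S ++ [v]).take i.val = S := by
            rw [hie]; exact List.take_left
          rw [hget]
          unfold PN
          rw [htake]
          exact ⟨v, mem_cn_self G v, hv'⟩
      · have hsub : {w | w ∉ cnUnion G (S ++ [v])} ⊂ {w | w ∉ cnUnion G S} := by
          constructor
          · intro w hw
            intro hwS
            exact hw ((mem_cnUnion_iff G _ w).mpr (by
              obtain ⟨u, hu, hcu⟩ := (mem_cnUnion_iff G S w).mp hwS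
              exact ⟨u, by simp [hu], hcu⟩))
          · intro hcon
            have : v ∈ {w | w ∉ cnUnion G (S ++ [v])} := hcon hv
            exact this ((mem_cnUnion_iff G _ v).mpr ⟨v, by simp, mem_cn_self G v⟩)
        have := Set.ncard_lt_ncard hsub (Set.toFinite _)
        omega
    · rw [Set.not_nonempty_iff_eq_empty] at hU
      refine ⟨S, hnd, ?_, hpn⟩
      intro w
      have hw : w ∈ cnUnion G S := by
        by_contra hw
        have : w ∈ {v | v ∉ cnUnion G S} := hw
        rw [hU] at this
        exact this
      exact (mem_cnUnion_iff G S w).mp hw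

lemma selfFoot_indep_aux {V : Type*} (G : SimpleGraph V) (S : List V) {u v : V}
    {i j : Fin S.length} (hij : i.val < j.val) (hiu : S.get i = u)
    (hvpn : v ∈ PN G S j.val v) (hadj : G.Adj u v) : False := by
  have hu : u ∈ S.take j.val := by
    rw [← hiu]
    have hlen : i.val < (S.take j.val).length := by
      simp [hij, i.2]
    have h1 := List.getElem_mem hlen
    rw [List.getElem_take] at h1
    rwa [List.get_eq_getElem]
  exact hvpn.2 ((mem_cnUnion_iff G _ v).mpr ⟨u, hu, Set.mem_insert_of_mem _ hadj⟩)

lemma selfFoot_indep {V : Type*} {G : SimpleGraph V} {S : List V} :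
    IsIndep G (selfFoot G S) := by
  rintro u ⟨i, hiu, hupn⟩ v ⟨j, hjv, hvpn⟩ hne hadj
  rcases lt_trichotomy i.val j.val with hlt | heq | hgt
  · exact selfFoot_indep_aux G S hlt hiu hvpn hadj
  · exact hne (by rw [← hiu, ← hjv, Fin.ext heq])
  · exact selfFoot_indep_aux G S hgt hjv hupn hadj.symm

/-- `γ_gr(G) = max { γ_gr(G, I) : I independent set of G }`. -/
theorem stmt19 {V : Type*} [Fintype V] [DecidableEq V] (G : SimpleGraph V) :
    IsGreatest {k : ℕ | ∃ I : Finset V, IsIndep G ↑I ∧ k = gammaGrOn G ↑I}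
      (gammaGr G) := by
  classical
  obtain ⟨S₀, hS₀⟩ := exists_legal G
  have hbdd := bddAbove_legal G
  have hne : {k | ∃ S : List V, IsLegal G S ∧ S.length = k}.Nonempty :=
    ⟨S₀.length, S₀, hS₀, rfl⟩
  obtain ⟨S, hS, hlen⟩ : gammaGr G ∈ {k | ∃ S : List V, IsLegal G S ∧ S.length = k} :=
    Nat.sSup_mem hne hbdd
  have hbddOn : ∀ I : Set V,
      BddAbove {k | ∃ T : List V, IsLegal G T ∧ selfFoot G T = I ∧ T.length = k} := by
    intro I
    refine ⟨Fintype.card V, ?_⟩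
    rintro k ⟨T, hT, -, rfl⟩
    exact hT.nodup.length_le_card
  have hsub : ∀ I : Set V,
      {k | ∃ T : List V, IsLegal G T ∧ selfFoot G T = I ∧ T.length = k} ⊆
        {k | ∃ T : List V, IsLegal G T ∧ T.length = k} := by
    rintro I k ⟨T, hT, -, rfl⟩
    exact ⟨T, hT, rfl⟩
  constructor
  · refine ⟨(Set.toFinite (selfFoot G S)).toFinset, ?_, ?_⟩
    · rw [Set.Finite.coe_toFinset]
      exact selfFoot_indep
    · rw [Set.Finite.coe_toFinset]
      refine le_antisymm ?_ ?_
      · calc gammaGr G = S.length := hlen.symm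
          _ ≤ gammaGrOn G (selfFoot G S) :=
            le_csSup (hbddOn _) ⟨S, hS, rfl, rfl⟩
      · exact csSup_le_csSup hbdd ⟨S.length, S, hS, rfl, rfl⟩ (hsub _)
  · rintro k ⟨I, hI, rfl⟩
    rcases Set.eq_empty_or_nonempty
        {k | ∃ T : List V, IsLegal G T ∧ selfFoot G T = (↑I : Set V) ∧ T.length = k} with
      he | hne'
    · unfold gammaGrOn
      rw [he, csSup_empty]
      exact Nat.zero_le _
    · exact csSup_le_csSup hbdd hne' (hsub _)
end
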